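/- Let G be a group of diagonal type with socle T^k, and let t_1,…,t_k ∈ T be such that at least two of the t_i equal the identity, at least one t_i is non-trivial, and the non-trivial t_i are pairwise distinct. If (α,…,α)π ∈ G fixes D(φ_{t_1},…,φ_{t_k}) ∈ Ω(k,T), then t_i α = t_{iπ} for all i ∈ {1,…,k}. -/

import Mathlib

/-!
Common setup for groups of diagonal type, following Fawcett,
"The base size of a primitive diagonal group".
-/

namespace Diag

variable (T : Type) [Group T] (k : ℕ)

/-- The permutation action of `S_k` on `k`-tuples of automorphisms of `T`,
as a homomorphism into the automorphism group of `Fin k → MulAut T`;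
this is the datum defining the wreath product `Aut(T) ≀ S_k`. -/
def permAction : Equiv.Perm (Fin k) →* MulAut (Fin k → MulAut T) where
  toFun π :=
    { toFun := fun f => f ∘ π.symm
      invFun := fun f => f ∘ π
      left_inv := fun f => by ext i; simp
      right_inv := fun f => by ext i; simp
      map_mul' := fun f g => rfl }
  map_one' := by ext f i; rfl
  map_mul' := fun π σ => by ext f i; rfl

@[simp] lemma permAction_apply (π : Equiv.Perm (Fin k)) (f : Fin k → MulAut T) (i : Fin k) :
    permAction T k π f i = f (π.symm i) := rfl

/-- The wreath product `Aut(T) ≀_k S_k`. -/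
abbrev Wr := SemidirectProduct (Fin k → MulAut T) (Equiv.Perm (Fin k)) (permAction T k)

/-- `Inn(T)`, the group of inner automorphisms, as a subgroup of `Aut(T)`. -/
def Inn : Subgroup (MulAut T) := (MulAut.conj : T →* MulAut T).range

instance : (Inn T).Normal := by
  constructor
  rintro n ⟨t, rfl⟩ g
  refine ⟨g t, ?_⟩
  ext x
  simp [MulAut.conj_apply, map_mul, map_inv]

/-- `W(k,T) = {(α₁,…,α_k)π ∈ Aut(T) ≀ S_k : α₁Inn(T) = α_iInn(T) for all i}`. -/
def Wgrp : Subgroup (Wr T k) where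
  carrier := {w | ∀ i j, (w.left i)⁻¹ * w.left j ∈ Inn T}
  one_mem' := by
    intro i j
    simp only [SemidirectProduct.one_left, Pi.one_apply, inv_one, one_mul]
    exact (Inn T).one_mem
  mul_mem' := by
    intro a b ha hb i j
    have key : ((a * b).left i)⁻¹ * (a * b).left j
        = (b.left (a.right.symm i))⁻¹ * ((a.left i)⁻¹ * a.left j) * (b.left (a.right.symm i))
          * ((b.left (a.right.symm i))⁻¹ * b.left (a.right.symm j)) := by
      simp only [SemidirectProduct.mul_left, Pi.mul_apply, permAction_apply]
      group
    rw [key]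
    exact mul_mem (Subgroup.Normal.conj_mem' (inferInstance : (Inn T).Normal) _ (ha i j) _) (hb _ _)
  inv_mem' := by
    intro a ha i j
    have key : ((a⁻¹).left i)⁻¹ * (a⁻¹).left j
        = a.left (a.right i) * ((a.left (a.right i))⁻¹ * a.left (a.right j))⁻¹
          * (a.left (a.right i))⁻¹ := by
      simp only [SemidirectProduct.inv_left, Pi.inv_apply, permAction_apply]
      have h1 : (a.right⁻¹).symm = a.right := by ext x; rfl
      rw [h1]
      group
    rw [key]
    exact Subgroup.Normal.conj_mem (inferInstance : (Inn T).Normal) _ (inv_mem (ha _ _)) _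

/-- `D(k,T) = {(α,…,α)π ∈ Aut(T) ≀ S_k}`, as a subgroup of the wreath product. -/
def Dgrp : Subgroup (Wr T k) where
  carrier := {w | ∀ i j, w.left i = w.left j}
  one_mem' := fun _ _ => rfl
  mul_mem' := by
    intro a b ha hb i j
    simp only [SemidirectProduct.mul_left, Pi.mul_apply, permAction_apply]
    rw [ha i j, hb (a.right.symm i) (a.right.symm j)]
  inv_mem' := by
    intro a ha i j
    simp only [SemidirectProduct.inv_left, Pi.inv_apply, permAction_apply]
    rw [ha ((a.right⁻¹).symm i) ((a.right⁻¹).symm j)]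

/-- `D(k,T)` viewed as a subgroup of `W(k,T)`. -/
def Dsub : Subgroup ↥(Wgrp T k) := (Dgrp T k).subgroupOf (Wgrp T k)

/-- `Ω(k,T)`, the coset space of `D(k,T)` in `W(k,T)`, on which `W(k,T)` acts
faithfully by multiplication. -/
abbrev Om := ↥(Wgrp T k) ⧸ Dsub T k

/-- For `t ∈ T`, the inner automorphism `φ_t : s ↦ t⁻¹st`. -/
def phi (t : T) : MulAut T := MulAut.conj t⁻¹

/-- The element `(φ_{t₁},…,φ_{t_k})` of `W(k,T)` determined by a tuple `t`. -/
def innW (t : Fin k → T) : ↥(Wgrp T k) :=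
  ⟨⟨fun i => phi T (t i), 1⟩, fun i j =>
    mul_mem (inv_mem (MonoidHom.mem_range.mpr ⟨(t i)⁻¹, rfl⟩))
      (MonoidHom.mem_range.mpr ⟨(t j)⁻¹, rfl⟩)⟩

/-- The point `D(φ_{t₁},…,φ_{t_k})` of `Ω(k,T)`. -/
def pointOf (t : Fin k → T) : Om T k := QuotientGroup.mk (innW T k t)

/-- The point `D = D(k,T)` of `Ω(k,T)` (the trivial coset). -/
def pt : Om T k := QuotientGroup.mk 1

/-- The diagonal element `(α,…,α)π` of `W(k,T)`. -/
def diagElt (α : MulAut T) (π : Equiv.Perm (Fin k)) : ↥(Wgrp T k) :=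
  ⟨⟨fun _ => α, π⟩, fun _ _ => by
    show α⁻¹ * α ∈ Inn T
    rw [inv_mul_cancel]; exact (Inn T).one_mem⟩

/-- The top group `P_G ≤ S_k` of a subgroup `G ≤ W(k,T)`: all permutations `π`
such that `(α₁,…,α_k)π ∈ G` for some automorphisms `α_i`. -/
def topGroup (G : Subgroup ↥(Wgrp T k)) : Subgroup (Equiv.Perm (Fin k)) :=
  Subgroup.map ((SemidirectProduct.rightHom).comp (Wgrp T k).subtype) G

/-- The subgroup `Inn(T)^k ⋊ S_k` of `W(k,T)`: all `(α₁,…,α_k)π` with every `α_i` inner. -/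
def InnSym : Subgroup ↥(Wgrp T k) where
  carrier := {w | ∀ i, (w : Wr T k).left i ∈ Inn T}
  one_mem' := fun _ => (Inn T).one_mem
  mul_mem' := by
    intro a b ha hb i
    show ((a : Wr T k) * b).left i ∈ Inn T
    rw [SemidirectProduct.mul_left]
    simp only [Pi.mul_apply, permAction_apply]
    exact mul_mem (ha i) (hb _)
  inv_mem' := by
    intro a ha i
    show ((a : Wr T k)⁻¹).left i ∈ Inn T
    rw [SemidirectProduct.inv_left]
    simp only [Pi.inv_apply, permAction_apply]
    exact inv_mem (ha _)

/-- The socle `Inn(T)^k` (that is, `T^k`) as a subgroup of `W(k,T)`. -/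
def InnK : Subgroup ↥(Wgrp T k) :=
  InnSym T k ⊓ Subgroup.comap ((SemidirectProduct.rightHom).comp (Wgrp T k).subtype) ⊥

/-- The subgroup `Inn(T)^k ⋊ A_k` of `W(k,T)`. -/
def InnAlt : Subgroup ↥(Wgrp T k) :=
  InnSym T k ⊓ Subgroup.comap ((SemidirectProduct.rightHom).comp (Wgrp T k).subtype)
    (alternatingGroup (Fin k))

/-- The subgroup `A(k,T) ⋊ P` of `W(k,T)`, for `P ≤ S_k`: all elements of
`W(k,T)` whose permutation part lies in `P`. -/
def AP (P : Subgroup (Equiv.Perm (Fin k))) : Subgroup ↥(Wgrp T k) :=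
  Subgroup.comap ((SemidirectProduct.rightHom).comp (Wgrp T k).subtype) P

/-- `B ⊆ Ω(k,T)` is a base for `G ≤ W(k,T)`: only the identity of `G`
fixes every point of `B`. -/
def IsBase (G : Subgroup ↥(Wgrp T k)) (B : Set (Om T k)) : Prop :=
  ∀ g ∈ G, (∀ ω ∈ B, g • ω = ω) → g = 1

/-- `b(G)`: the minimal size of a base for `G` acting on `Ω(k,T)`. -/
noncomputable def baseSize (G : Subgroup ↥(Wgrp T k)) : ℕ :=
  sInf {n | ∃ B : Finset (Om T k), B.card = n ∧ IsBase T k G ↑B}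

/-- `G ≤ W(k,T)` acts primitively on `Ω(k,T)`: the action is transitive and
every block is trivial. -/
def IsPrimitive (G : Subgroup ↥(Wgrp T k)) : Prop :=
  (∀ ω₁ ω₂ : Om T k, ∃ g ∈ G, g • ω₁ = ω₂) ∧
  ∀ B : Set (Om T k),
    (∀ g ∈ G, (g • ·) '' B = B ∨ Disjoint ((g • ·) '' B) B) →
    B.Subsingleton ∨ B = Set.univ

/-- `G` is a group of diagonal type with socle `T^k`:
`Inn(T)^k ≤ G ≤ W(k,T)` and `G` acts primitively on `Ω(k,T)`. -/
def IsDiagonalType (G : Subgroup ↥(Wgrp T k)) : Prop :=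
  InnK T k ≤ G ∧ IsPrimitive T k G

/-- A subgroup `P ≤ S_k` is primitive in its natural action on `{1,…,k}`:
the action is transitive and every block is trivial. -/
def PermPrimitive (P : Subgroup (Equiv.Perm (Fin k))) : Prop :=
  (∀ i j : Fin k, ∃ π ∈ P, π i = j) ∧
  ∀ B : Set (Fin k),
    (∀ π ∈ P, (π : Fin k → Fin k) '' B = B ∨ Disjoint ((π : Fin k → Fin k) '' B) B) →
    B.Subsingleton ∨ B = Set.univ

end Diag

open Diag

/-- **Lemma (distinct entries).** Let `t₁,…,t_k ∈ T` be such that at least two of the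
`t_i` are trivial, at least one is non-trivial, and the non-trivial `t_i` are pairwise
distinct.  If `(α,…,α)π ∈ G` fixes `D(φ_{t₁},…,φ_{t_k})`, then `t_iα = t_{iπ}` for
all `i`. -/
theorem fix_point_of_distinct_entries
    (T : Type) [Group T] [Fintype T] [IsSimpleGroup T]
    (hab : ∃ a b : T, a * b ≠ b * a)
    (k : ℕ) (hk : 2 ≤ k)
    (G : Subgroup ↥(Wgrp T k)) (hG : IsDiagonalType T k G)
    (t : Fin k → T)
    (htwo : ∃ i j : Fin k, i ≠ j ∧ t i = 1 ∧ t j = 1)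
    (hone : ∃ i, t i ≠ 1)
    (hdist : ∀ i j : Fin k, i ≠ j → t i ≠ 1 → t j ≠ 1 → t i ≠ t j)
    (α : MulAut T) (π : Equiv.Perm (Fin k))
    (hmem : diagElt T k α π ∈ G)
    (hfix : diagElt T k α π • pointOf T k t = pointOf T k t) :
    ∀ i, α (t i) = t (π i) := by

  -- the center of T is trivial
  have hcenter : Subgroup.center T = ⊥ := by
    rcases Subgroup.Normal.eq_bot_or_eq_top (inferInstance : (Subgroup.center T).Normal) with h | h
    · exact h
    · exfalso
      obtain ⟨a, b, hab⟩ := hab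
      exact hab ((Subgroup.mem_center_iff.mp (h ▸ Subgroup.mem_top a) b).symm)
  -- phi is injective
  have hphi : ∀ a b : T, phi T a = phi T b → a = b := by
    intro a b h
    have hs : ∀ s : T, a⁻¹ * s * a = b⁻¹ * s * b := by
      intro s
      have := DFunLike.congr_fun (congrArg (MulEquiv.toEquiv) h) s
      simpa [phi, MulAut.conj] using this
    have hc : b * a⁻¹ ∈ Subgroup.center T := by
      rw [Subgroup.mem_center_iff]
      intro s
      have := hs s
      have h2 : b * (a⁻¹ * s * a) * a⁻¹ = b * (b⁻¹ * s * b) * a⁻¹ := by rw [this]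
      calc s * (b * a⁻¹) = b * (b⁻¹ * s * b) * a⁻¹ := by group
        _ = b * (a⁻¹ * s * a) * a⁻¹ := h2.symm
        _ = (b * a⁻¹) * s := by group
    rw [hcenter, Subgroup.mem_bot] at hc
    have : b = a := by
      have := mul_eq_one_iff_eq_inv.mp hc
      simpa using this
    exact this.symm
  -- conjugation formula
  have happ : ∀ (a s : T), phi T a s = a⁻¹ * s * a := by
    intro a s; simp [phi, MulAut.conj_apply]
  have hconj : ∀ a : T, α * phi T a * α⁻¹ = phi T (α a) := by
    intro a
    ext s
    show α ((phi T a) ((α⁻¹ : MulAut T) s)) = (phi T (α a)) s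
    rw [happ, happ]
    simp [map_mul, map_inv]
  -- extract the component condition from hfix
  have hmemD : (diagElt T k α π * innW T k t)⁻¹ * innW T k t ∈ Dsub T k := by
    rw [← QuotientGroup.eq]
    exact hfix
  rw [Dsub, Subgroup.mem_subgroupOf] at hmemD
  have hD : ∀ i j : Fin k,
      (phi T (t i))⁻¹ * α⁻¹ * phi T (t (π i))
        = (phi T (t j))⁻¹ * α⁻¹ * phi T (t (π j)) := by
    intro i j
    have := hmemD i j
    have hsymm : ∀ (f : Fin k → MulAut T) (l : Fin k),
        (MulEquiv.symm ((permAction T k) π)) f l = f (π l) := fun f l => rfl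
    simpa [diagElt, innW, SemidirectProduct.mul_left, SemidirectProduct.inv_left,
      permAction_apply, mul_assoc, hsymm] using this
  -- two trivial entries
  obtain ⟨a, b, hne, hta, htb⟩ := htwo
  have hphi1 : phi T (1 : T) = 1 := by ext s; simp [phi, MulAut.conj]
  have hab2 : phi T (t (π a)) = phi T (t (π b)) := by
    have := hD a b
    rw [hta, htb, hphi1] at this
    simpa using this
  have htpab : t (π a) = t (π b) := hphi _ _ hab2
  have htpa : t (π a) = 1 := by
    by_contra h1
    have h2 : t (π b) ≠ 1 := fun h => h1 (htpab.trans h)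
    exact hdist (π a) (π b) (fun h => hne (π.injective h)) h1 h2 htpab
  -- conclude
  intro i
  have hDi := hD i a
  rw [hta, htpa, hphi1] at hDi
  have h3 : (phi T (t i))⁻¹ * α⁻¹ * phi T (t (π i)) = α⁻¹ := by simpa using hDi
  have h4 : phi T (t (π i)) = α * phi T (t i) * α⁻¹ := by
    have := congrArg (fun x => α * phi T (t i) * x) h3
    rw [← this]
    group
  rw [hconj] at h4
  exact (hphi _ _ h4).symm
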